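/- arXiv:1904.10556 — 2 statements merged into one kernel-verified Lean document; each statement's English description precedes it below -/
import Mathlib

section
/- Let 0 < α < 1, k₀₁ > 0, k > 0, and define q(t) = k₀₁ · t · E_{α,2}(-k·t^α) for t ≥ 0. Then q(0) = 0, q is differentiable on (0,∞), and q solves the one-compartment model with constant-rate input and fractional elimination: for every t > 0, q'(t) = k₀₁ - k · (1/Γ(α)) · ∫_0^t q'(τ)·(t-τ)^{α-1} dτ (the integral term being the Caputo derivative of order 1-α of q). -/
open Real Filter Nat

/-- Summability of Mittag-Leffler type series. -/
lemma ml_summable {α β : ℝ} (hα : 0 < α) (hβ : 1 ≤ β) {x : ℝ} (hx : 0 ≤ x) :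
    Summable (fun n : ℕ => x ^ n / Real.Gamma (α * n + β)) := by
  set c : ℝ := x + 2 with hc
  have hc1 : 1 < c := by simp [hc]; linarith
  have hc0 : 0 < c := by linarith
  set D : ℝ := c ^ (1/α) with hD
  have hD1 : 1 ≤ D := by
    calc (1:ℝ) = c ^ (0:ℝ) := by rw [Real.rpow_zero]
    _ ≤ D := Real.rpow_le_rpow_of_exponent_le hc1.le (by positivity)
  -- eventually m! ≥ D^(m+2)
  have h0 : Tendsto (fun m : ℕ => D ^ (m+2) / m !) atTop (nhds 0) := by
    have hs := (Real.summable_pow_div_factorial D).mul_left (D^2)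
    have : (fun m : ℕ => D ^ (m+2) / m !) = fun m : ℕ => D^2 * (D ^ m / m !) := by
      funext m; rw [pow_add]; ring
    rw [this]
    exact hs.tendsto_atTop_zero
  have hev : ∀ᶠ m : ℕ in atTop, D ^ (m+2) / m ! < 1 := h0.eventually_lt_const one_pos
  obtain ⟨M, hM⟩ := eventually_atTop.mp hev
  -- choose N
  set N : ℕ := ⌈((M:ℝ) + 3) / α⌉₊ with hN
  have hNn : ∀ n : ℕ, N ≤ n → (M:ℝ) + 3 ≤ α * n := by
    intro n hn
    have h1 : ((M:ℝ)+3)/α ≤ (N:ℝ) := Nat.le_ceil _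
    have h2 : (N:ℝ) ≤ n := Nat.cast_le.mpr hn
    rw [div_le_iff₀ hα] at h1
    calc (M:ℝ)+3 ≤ N * α := h1
    _ ≤ n * α := by nlinarith
    _ = α * n := by ring
  have key : ∀ n : ℕ, (M:ℝ) + 3 ≤ α * n → x ^ n / Real.Gamma (α * n + β) ≤ (x/c) ^ n := by
    intro n hn
    set m : ℕ := ⌊α * n⌋₊ - 1 with hm
    have hfl3 : 3 ≤ ⌊α * n⌋₊ := Nat.le_floor (by push_cast; linarith)
    have hflM : M + 2 ≤ ⌊α * n⌋₊ := Nat.le_floor (by push_cast; linarith)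
    have hm1 : m + 1 = ⌊α * n⌋₊ := by omega
    have hmM : M ≤ m := by omega
    have hfl_le : (⌊α * n⌋₊ : ℝ) ≤ α * n := Nat.floor_le (by positivity)
    have hfl_gt : α * n < (⌊α * n⌋₊ : ℝ) + 1 := Nat.lt_floor_add_one _
    -- Gamma monotonicity
    have hG1 : (m ! : ℝ) ≤ Real.Gamma (α * n + β) := by
      have e1 : Real.Gamma ((m:ℝ) + 1) = m ! := Real.Gamma_nat_eq_factorial m
      rw [← e1]
      apply Real.Gamma_strictMonoOn_Ici.monotoneOn
      · simp only [Set.mem_Ici]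
        have : (2:ℝ) ≤ ((m:ℝ)+1) := by
          have : (3:ℕ) ≤ m + 1 := by omega
          have := Nat.cast_le (α := ℝ).mpr this
          push_cast at this; linarith
        exact this
      · simp only [Set.mem_Ici]; linarith
      · have : ((m:ℝ)+1) ≤ α * n := by
          have : ((m+1 : ℕ):ℝ) ≤ α * n := by rw [hm1]; exact hfl_le
          push_cast at this; linarith
        linarith
    -- D^(m+2) ≤ m!
    have hG2 : D ^ (m+2) ≤ (m ! : ℝ) := by
      have := hM m hmM
      rw [div_lt_one (by positivity)] at this
      exact this.le
    -- c^n ≤ D^(m+2)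
    have hG3 : c ^ n ≤ D ^ (m+2) := by
      have e1 : D ^ (m+2) = c ^ ((1/α) * ((m:ℝ)+2)) := by
        rw [hD, ← Real.rpow_natCast (c ^ (1/α)) (m+2), ← Real.rpow_mul hc0.le]
        push_cast; ring_nf
      have e2 : (c:ℝ) ^ n = c ^ ((n:ℝ)) := by rw [Real.rpow_natCast]
      rw [e1, e2]
      apply Real.rpow_le_rpow_of_exponent_le hc1.le
      have hmn : α * n ≤ (m:ℝ) + 2 := by
        have : ((m+1:ℕ):ℝ) + 1 = (m:ℝ) + 2 := by push_cast; ring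
        rw [← this, hm1]; exact hfl_gt.le
      rw [one_div]
      calc (n:ℝ) = α⁻¹ * (α * n) := by field_simp
      _ ≤ α⁻¹ * ((m:ℝ) + 2) := by gcongr
    have hle : c ^ n ≤ Real.Gamma (α * n + β) := le_trans (hG3.trans hG2) hG1
    calc x ^ n / Real.Gamma (α * n + β) ≤ x ^ n / c ^ n := by
          apply div_le_div_of_nonneg_left (pow_nonneg hx n) (pow_pos hc0 n) hle
    _ = (x/c) ^ n := by rw [div_pow]
  have hnn : ∀ n : ℕ, 0 ≤ x ^ n / Real.Gamma (α * n + β) := by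
    intro n
    have hp : (0:ℝ) < α * n + β := by
      have : (0:ℝ) ≤ α * n := by positivity
      linarith
    have := Real.Gamma_pos_of_pos hp
    positivity
  rw [← summable_nat_add_iff N]
  have hgeo : Summable (fun n : ℕ => (x/c) ^ n * (x/c) ^ N) :=
    (summable_geometric_of_lt_one (div_nonneg hx hc0.le)
      ((div_lt_one hc0).mpr (by linarith))).mul_right _
  apply Summable.of_nonneg_of_le (fun n => hnn _) (fun n => ?_) hgeo
  have hkey := key (n+N) (hNn (n+N) (Nat.le_add_left N n))
  calc x ^ (n+N) / Real.Gamma (α * ↑(n+N) + β) ≤ (x/c) ^ (n+N) := hkey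
  _ = (x/c) ^ n * (x/c) ^ N := pow_add _ _ _

open Real MeasureTheory Set intervalIntegral

lemma rbeta_integrable {a b t : ℝ} (ha : 0 < a) (hb : 0 < b) (ht : 0 < t) :
    IntegrableOn (fun x : ℝ => x ^ (a-1) * (t - x) ^ (b-1)) (Ioc 0 t) := by
  have hC : IntervalIntegrable
      (fun x : ℝ => (x : ℂ) ^ ((a:ℂ) - 1) * (1 - (x : ℂ)) ^ ((b:ℂ) - 1)) volume 0 1 :=
    Complex.betaIntegral_convergent (by simpa using ha) (by simpa using hb)
  have h2 := hC.comp_mul_left (c := t⁻¹)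
  rw [div_inv_eq_mul, div_inv_eq_mul, zero_mul, one_mul] at h2
  set g : ℝ → ℂ := fun x : ℝ => (↑(t⁻¹ * x) : ℂ) ^ ((a:ℂ) - 1) * (1 - (↑(t⁻¹ * x) : ℂ)) ^ ((b:ℂ) - 1) with hg
  have h3 : IntegrableOn (fun x => ‖g x‖) (Ioc 0 t) := by
    have := ((intervalIntegrable_iff_integrableOn_Ioc_of_le ht.le).mp h2).norm
    exact this
  rw [integrableOn_Ioc_iff_integrableOn_Ioo] at h3 ⊢
  have h4 : EqOn (fun x : ℝ => x ^ (a-1) * (t - x) ^ (b-1))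
      (fun x => t ^ (a-1) * t ^ (b-1) * ‖g x‖) (Ioo 0 t) := by
    intro x hx
    obtain ⟨hx0, hxt⟩ := hx
    have hx0' : 0 < t⁻¹ * x := by positivity
    have hx1' : 0 < 1 - t⁻¹ * x := by
      rw [sub_pos]
      calc t⁻¹ * x < t⁻¹ * t := by gcongr
      _ = 1 := inv_mul_cancel₀ ht.ne'
    have e1 : ‖g x‖ = (t⁻¹ * x) ^ (a-1) * (1 - t⁻¹ * x) ^ (b-1) := by
      rw [hg]
      have ecast : 1 - (↑(t⁻¹ * x) : ℂ) = ((1 - t⁻¹ * x : ℝ) : ℂ) := by push_cast; ring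
      simp only [norm_mul, ecast]
      rw [Complex.norm_cpow_eq_rpow_re_of_pos hx0',
        Complex.norm_cpow_eq_rpow_re_of_pos hx1']
      norm_num
    show x ^ (a-1) * (t - x) ^ (b-1) = t ^ (a-1) * t ^ (b-1) * ‖g x‖
    rw [e1]
    have e2 : x ^ (a-1) = t ^ (a-1) * (t⁻¹ * x) ^ (a-1) := by
      rw [← Real.mul_rpow ht.le (by positivity)]
      congr 1
      field_simp
    have e3 : (t - x) ^ (b-1) = t ^ (b-1) * (1 - t⁻¹ * x) ^ (b-1) := by
      rw [← Real.mul_rpow ht.le (by positivity)]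
      congr 1
      field_simp
    rw [e2, e3]; ring
  exact MeasureTheory.IntegrableOn.congr_fun
    (h3.const_mul (t ^ (a-1) * t ^ (b-1))) h4.symm measurableSet_Ioo

lemma rbeta_value {a b t : ℝ} (ha : 0 < a) (hb : 0 < b) (ht : 0 < t) :
    ∫ x in (0:ℝ)..t, x ^ (a-1) * (t - x) ^ (b-1)
      = Real.Gamma a * Real.Gamma b / Real.Gamma (a+b) * t ^ (a+b-1) := by
  have hG : (0:ℝ) < Real.Gamma (a+b) := Real.Gamma_pos_of_pos (by linarith)
  have hGC : Complex.Gamma ((a:ℂ)+(b:ℂ)) ≠ 0 := by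
    rw [show ((a:ℂ)+(b:ℂ)) = ((a+b:ℝ):ℂ) by push_cast; ring, Complex.Gamma_ofReal]
    exact_mod_cast hG.ne'
  have h1 : ∫ x in (0:ℝ)..t, (x:ℂ)^((a:ℂ)-1) * ((t:ℂ)-x)^((b:ℂ)-1)
      = (t:ℂ)^((a:ℂ)+(b:ℂ)-1) * Complex.betaIntegral a b :=
    Complex.betaIntegral_scaled _ _ ht
  have h2 : Complex.betaIntegral a b
      = (Complex.Gamma a * Complex.Gamma b) / Complex.Gamma ((a:ℂ)+(b:ℂ)) := by
    rw [eq_div_iff hGC]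
    rw [Complex.Gamma_mul_Gamma_eq_betaIntegral (by simpa using ha) (by simpa using hb)]
    ring
  have h3 : ∫ x in (0:ℝ)..t, (x:ℂ)^((a:ℂ)-1)*((t:ℂ)-x)^((b:ℂ)-1)
      = ((∫ x in (0:ℝ)..t, x^(a-1)*(t-x)^(b-1) : ℝ) : ℂ) := by
    rw [← intervalIntegral.integral_ofReal]
    apply intervalIntegral.integral_congr
    intro x hx
    rw [Set.uIcc_of_le ht.le] at hx
    obtain ⟨hx0, hxt⟩ := hx
    symm
    show ((x^(a-1)*(t-x)^(b-1) : ℝ) : ℂ) = _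
    rw [Complex.ofReal_mul, Complex.ofReal_cpow hx0, Complex.ofReal_cpow (by linarith : (0:ℝ) ≤ t - x)]
    push_cast
    ring
  rw [h3, h2] at h1
  have h4 : (t:ℂ)^((a:ℂ)+(b:ℂ)-1) = ((t ^ (a+b-1) : ℝ) : ℂ) := by
    rw [Complex.ofReal_cpow ht.le]
    push_cast
    ring_nf
  rw [h4] at h1
  have h5 : ((∫ x in (0:ℝ)..t, x^(a-1)*(t-x)^(b-1) : ℝ) : ℂ)
      = ((Real.Gamma a * Real.Gamma b / Real.Gamma (a+b) * t ^ (a+b-1) : ℝ) : ℂ) := by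
    rw [h1]
    rw [show ((a:ℂ)+(b:ℂ)) = ((a+b:ℝ):ℂ) by push_cast; ring]
    rw [Complex.Gamma_ofReal, Complex.Gamma_ofReal, Complex.Gamma_ofReal]
    push_cast
    ring
  exact_mod_cast h5

/-- The two-parameter Mittag-Leffler function `E_{a,b}(z) = ∑_{k=0}^∞ z^k / Γ(a·k + b)`. -/
noncomputable def mittagLeffler (a b : ℝ) (z : ℝ) : ℝ :=
  ∑' k : ℕ, z ^ k / Real.Gamma (a * k + b)

/-- terms of the series for `q`. -/
noncomputable def mlF (α k k₀₁ : ℝ) (n : ℕ) (y : ℝ) : ℝ :=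
  k₀₁ * (-k)^n / Real.Gamma (α*n+2) * y^(α*n+1)

/-- terms of the series for `q'`. -/
noncomputable def mlG (α k k₀₁ : ℝ) (n : ℕ) (y : ℝ) : ℝ :=
  k₀₁ * (-k)^n / Real.Gamma (α*n+1) * y^(α*n)

section aux
variable {α k k₀₁ : ℝ} (hα : 0 < α) (hk : 0 < k) (hk₀₁ : 0 < k₀₁)
include hα hk hk₀₁

lemma pow_rpow_eq {y : ℝ} (hy : 0 ≤ y) (n : ℕ) : (k * y^α)^n = k^n * y^(α*n) := by
  rw [mul_pow, ← Real.rpow_natCast (y^α) n, ← Real.rpow_mul hy]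

lemma mlG_abs {y : ℝ} (hy : 0 ≤ y) (n : ℕ) :
    |mlG α k k₀₁ n y| = k₀₁ * ((k*y^α)^n / Real.Gamma (α*n+1)) := by
  have hΓ : (0:ℝ) < Real.Gamma (α*n+1) := Real.Gamma_pos_of_pos (by positivity)
  rw [mlG, abs_mul, abs_div, abs_mul, abs_pow, abs_neg,
    abs_of_pos hk, abs_of_pos hk₀₁, abs_of_pos hΓ,
    abs_of_nonneg (Real.rpow_nonneg hy _), pow_rpow_eq hα hk hk₀₁ hy]
  ring

lemma mlG_summable {y : ℝ} (hy : 0 ≤ y) : Summable (fun n => mlG α k k₀₁ n y) := by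
  rw [← summable_abs_iff]
  have := (ml_summable hα le_rfl (x := k * y^α) (by positivity)).mul_left k₀₁
  exact this.congr (fun n => (mlG_abs hα hk hk₀₁ hy n).symm)

lemma Gamma_two_step (s : ℝ) (hs : 0 < s) : Real.Gamma (s + 1) = s * Real.Gamma s :=
  Real.Gamma_add_one hs.ne'

lemma mlF_summable {y : ℝ} (hy : 0 < y) : Summable (fun n => mlF α k k₀₁ n y) := by
  rw [← summable_abs_iff]
  apply Summable.of_nonneg_of_le (fun n => abs_nonneg _) (fun n => ?_)
    ((ml_summable hα le_rfl (x := k * y^α) (by positivity)).mul_left (k₀₁ * y))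
  have h1 : (0:ℝ) < α*n+1 := by positivity
  have hΓ1 : (0:ℝ) < Real.Gamma (α*n+1) := Real.Gamma_pos_of_pos h1
  have hΓ2 : Real.Gamma (α*n+2) = (α*n+1) * Real.Gamma (α*n+1) := by
    rw [show (α*n+2 : ℝ) = (α*n+1)+1 by ring]
    exact Gamma_two_step hα hk hk₀₁ _ h1
  have habs : |mlF α k k₀₁ n y| = k₀₁ * (k^n * y^(α*n) * y) / ((α*n+1) * Real.Gamma (α*n+1)) := by
    rw [mlF, abs_mul, abs_div, abs_mul, abs_pow, abs_neg,
      abs_of_pos hk, abs_of_pos hk₀₁, hΓ2,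
      abs_of_pos (by positivity : (0:ℝ) < (α*n+1) * Real.Gamma (α*n+1)),
      abs_of_nonneg (Real.rpow_nonneg hy.le _),
      show (α*(n:ℝ)+1 : ℝ) = α*n + 1 from rfl,
      Real.rpow_add hy (α*n) 1, Real.rpow_one]
    ring
  rw [habs, pow_rpow_eq hα hk hk₀₁ hy.le]
  calc k₀₁ * (k ^ n * y ^ (α * ↑n) * y) / ((α*↑n+1) * Real.Gamma (α*↑n+1))
      ≤ k₀₁ * (k ^ n * y ^ (α * ↑n) * y) / (1 * Real.Gamma (α*↑n+1)) := by
        apply div_le_div_of_nonneg_left (by positivity) (by positivity)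
        nlinarith [hΓ1, mul_nonneg hα.le (Nat.cast_nonneg' (α := ℝ) n)]
    _ = k₀₁ * y * (k ^ n * y ^ (α * ↑n) / Real.Gamma (α*↑n+1)) := by ring

lemma mlq_eq {y : ℝ} (hy : 0 < y) :
    k₀₁ * y * mittagLeffler α 2 (-(k * y^α)) = ∑' n, mlF α k k₀₁ n y := by
  rw [mittagLeffler, ← tsum_mul_left]
  apply tsum_congr
  intro n
  have e1 : (-(k * y^α))^n = (-k)^n * y^(α*n) := by
    rw [show -(k * y^α) = (-k) * y^α by ring, mul_pow,
      ← Real.rpow_natCast (y^α) n, ← Real.rpow_mul hy.le]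
  rw [mlF, e1, Real.rpow_add hy (α*n) 1, Real.rpow_one]
  ring

lemma ml_hasDerivAt {t : ℝ} (ht : 0 < t) :
    HasDerivAt (fun y : ℝ => k₀₁ * y * mittagLeffler α 2 (-(k * y^α)))
      (∑' n, mlG α k k₀₁ n t) t := by
  have husum : Summable (fun n : ℕ => k₀₁ * ((k*(t+1)^α)^n / Real.Gamma (α*n+1))) :=
    (ml_summable hα le_rfl (by positivity)).mul_left k₀₁
  have hderiv : ∀ (n : ℕ) (y : ℝ), y ∈ Set.Ioo (0:ℝ) (t+1) →
      HasDerivAt (mlF α k k₀₁ n) (mlG α k k₀₁ n y) y := by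
    intro n y _
    have h1 : HasDerivAt (fun z : ℝ => z ^ (α*n+1))
        ((α*n+1) * y ^ (α*n+1-1)) y :=
      Real.hasDerivAt_rpow_const (Or.inr (by
        have : (0:ℝ) ≤ α*n := by positivity
        linarith))
    have h2 := h1.const_mul (k₀₁ * (-k)^n / Real.Gamma (α*n+2))
    have hval : k₀₁ * (-k)^n / Real.Gamma (α*n+2) * ((α*n+1) * y ^ (α*n+1-1))
        = mlG α k k₀₁ n y := by
      have h3 : (0:ℝ) < α*n+1 := by positivity
      have hΓ1 : (0:ℝ) < Real.Gamma (α*n+1) := Real.Gamma_pos_of_pos h3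
      have hΓ2 : Real.Gamma (α*n+2) = (α*n+1) * Real.Gamma (α*n+1) := by
        rw [show (α*(n:ℝ)+2 : ℝ) = (α*n+1)+1 by ring]
        exact Real.Gamma_add_one h3.ne'
      rw [mlG, hΓ2, show (α*(n:ℝ)+1-1 : ℝ) = α*n by ring]
      field_simp
    rw [hval] at h2
    exact h2
  have hbound : ∀ (n : ℕ) (y : ℝ), y ∈ Set.Ioo (0:ℝ) (t+1) →
      ‖mlG α k k₀₁ n y‖ ≤ k₀₁ * ((k*(t+1)^α)^n / Real.Gamma (α*n+1)) := by
    intro n y hy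
    rw [Real.norm_eq_abs, mlG_abs hα hk hk₀₁ hy.1.le n]
    have hΓ1 : (0:ℝ) < Real.Gamma (α*n+1) := Real.Gamma_pos_of_pos (by positivity)
    have hle : k * y^α ≤ k * (t+1)^α :=
      mul_le_mul_of_nonneg_left (Real.rpow_le_rpow hy.1.le hy.2.le hα.le) hk.le
    have h2 : (k*y^α)^n ≤ (k*(t+1)^α)^n := pow_le_pow_left₀ (mul_nonneg hk.le (Real.rpow_nonneg hy.1.le _)) hle n
    exact mul_le_mul_of_nonneg_left ((div_le_div_iff_of_pos_right hΓ1).mpr h2) hk₀₁.le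
  have hmem : t ∈ Set.Ioo (0:ℝ) (t+1) := ⟨ht, lt_add_one t⟩
  have key := hasDerivAt_tsum_of_isPreconnected husum isOpen_Ioo
    (convex_Ioo (0:ℝ) (t+1)).isPreconnected hderiv hbound hmem
    (mlF_summable hα hk hk₀₁ ht) hmem
  apply key.congr_of_eventuallyEq
  filter_upwards [Ioi_mem_nhds ht] with y hy
  exact mlq_eq hα hk hk₀₁ hy

lemma ml_caputo {t : ℝ} (ht : 0 < t) :
    ∫ τ in (0:ℝ)..t, (∑' n, mlG α k k₀₁ n τ) * (t-τ)^(α-1)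
      = ∑' n : ℕ, (k₀₁ * (-k)^n / Real.Gamma (α*n+1)) *
          (Real.Gamma (α*n+1) * Real.Gamma α / Real.Gamma (α*n+1+α) * t^(α*n+α)) := by
  have e : ∀ n : ℕ, (α*(n:ℝ)+1-1 : ℝ) = α*n := fun n => by ring
  have e2 : ∀ n : ℕ, (α*(n:ℝ)+1+α-1 : ℝ) = α*n+α := fun n => by ring
  have hbeta : ∀ n : ℕ, ∫ x in (0:ℝ)..t, x^(α*(n:ℝ)) * (t-x)^(α-1)
      = Real.Gamma (α*n+1) * Real.Gamma α / Real.Gamma (α*n+1+α) * t^(α*n+α) := by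
    intro n
    have h := rbeta_value (a := α*n+1) (b := α) (by positivity) hα ht
    rw [e n, e2 n] at h
    exact h
  have hInt : ∀ n : ℕ, MeasureTheory.IntegrableOn
      (fun τ => mlG α k k₀₁ n τ * (t-τ)^(α-1)) (Set.Ioc 0 t) := by
    intro n
    have h := (rbeta_integrable (a := α*n+1) (b := α) (by positivity) hα ht).const_mul
      (k₀₁ * (-k)^n / Real.Gamma (α*n+1))
    rw [e n] at h
    apply MeasureTheory.IntegrableOn.congr_fun h _ measurableSet_Ioc
    intro x _
    show _ = mlG α k k₀₁ n x * (t-x)^(α-1)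
    rw [mlG]; ring
  have hnorm : ∀ n : ℕ, ∫ τ in Set.Ioc (0:ℝ) t, ‖mlG α k k₀₁ n τ * (t-τ)^(α-1)‖
      = k₀₁ * k^n / Real.Gamma (α*n+1) *
        (Real.Gamma (α*n+1) * Real.Gamma α / Real.Gamma (α*n+1+α) * t^(α*n+α)) := by
    intro n
    have heq : Set.EqOn (fun τ => ‖mlG α k k₀₁ n τ * (t-τ)^(α-1)‖)
        (fun τ => (k₀₁ * k^n / Real.Gamma (α*n+1)) * (τ^(α*(n:ℝ)) * (t-τ)^(α-1)))
        (Set.Ioc 0 t) := by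
      intro τ hτ
      simp only [Real.norm_eq_abs, abs_mul]
      rw [mlG_abs hα hk hk₀₁ hτ.1.le n,
        abs_of_nonneg (Real.rpow_nonneg (by linarith [hτ.2] : (0:ℝ) ≤ t - τ) _),
        pow_rpow_eq hα hk hk₀₁ hτ.1.le]
      ring
    rw [MeasureTheory.setIntegral_congr_fun measurableSet_Ioc heq,
      MeasureTheory.integral_const_mul _ _, ← intervalIntegral.integral_of_le ht.le, hbeta n]
  have hsumnorm : Summable (fun n : ℕ =>
      ∫ τ in Set.Ioc (0:ℝ) t, ‖mlG α k k₀₁ n τ * (t-τ)^(α-1)‖) := by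
    apply Summable.congr _ (fun n => (hnorm n).symm)
    have hbase := (ml_summable hα (β := 1+α) (by linarith) (x := k * t^α)
      (by positivity)).mul_left (k₀₁ * Real.Gamma α * t^α)
    apply hbase.congr
    intro n
    have hΓ1 : (0:ℝ) < Real.Gamma (α*n+1) := Real.Gamma_pos_of_pos (by positivity)
    have hΓ2 : (0:ℝ) < Real.Gamma (α*n+1+α) := Real.Gamma_pos_of_pos (by positivity)
    rw [show (α*(n:ℝ)+(1+α) : ℝ) = α*n+1+α by ring, pow_rpow_eq hα hk hk₀₁ ht.le,
      show (α*(n:ℝ)+α : ℝ) = α*n+α from rfl, Real.rpow_add ht (α*n) α]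
    field_simp
  rw [intervalIntegral.integral_of_le ht.le]
  have heq2 : Set.EqOn (fun τ => (∑' n, mlG α k k₀₁ n τ) * (t-τ)^(α-1))
      (fun τ => ∑' n, mlG α k k₀₁ n τ * (t-τ)^(α-1)) (Set.Ioc 0 t) :=
    fun τ _ => (tsum_mul_right).symm
  rw [MeasureTheory.setIntegral_congr_fun measurableSet_Ioc heq2,
    ← MeasureTheory.integral_tsum_of_summable_integral_norm hInt hsumnorm]
  apply tsum_congr
  intro n
  have heq3 : Set.EqOn (fun τ => mlG α k k₀₁ n τ * (t-τ)^(α-1))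
      (fun τ => (k₀₁ * (-k)^n / Real.Gamma (α*n+1)) * (τ^(α*(n:ℝ)) * (t-τ)^(α-1)))
      (Set.Ioc 0 t) := by
    intro τ _
    show mlG α k k₀₁ n τ * (t-τ)^(α-1) = _
    rw [mlG]; ring
  rw [MeasureTheory.setIntegral_congr_fun measurableSet_Ioc heq3,
    MeasureTheory.integral_const_mul _ _, ← intervalIntegral.integral_of_le ht.le, hbeta n]

end aux

/-- Let 0 < α < 1, k₀₁ > 0, k > 0, and define
`q(t) = k₀₁ · t · E_{α,2}(-k·t^α)`. Then q(0) = 0, q is differentiable on (0,∞),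
and q solves the one-compartment model with constant-rate input and fractional
elimination: for every t > 0,
`q'(t) = k₀₁ - k · (1/Γ(α)) · ∫_0^t q'(τ)·(t-τ)^{α-1} dτ`. -/
theorem constant_infusion_fractional_elimination (α k₀₁ k : ℝ)
    (hα : 0 < α) (hα1 : α < 1) (hk₀₁ : 0 < k₀₁) (hk : 0 < k) (q : ℝ → ℝ)
    (hq : q = fun t : ℝ => k₀₁ * t * mittagLeffler α 2 (-(k * t ^ α))) :
    q 0 = 0 ∧
    (∀ t : ℝ, 0 < t → DifferentiableAt ℝ q t) ∧
    (∀ t : ℝ, 0 < t →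
      deriv q t = k₀₁ -
        k * ((1 / Real.Gamma α) * ∫ τ in (0:ℝ)..t, deriv q τ * (t - τ) ^ (α - 1))) := by
  subst hq
  refine ⟨by simp, fun t ht => (ml_hasDerivAt hα hk hk₀₁ ht).differentiableAt, ?_⟩
  intro t ht
  have hderivq : ∀ s : ℝ, 0 < s →
      deriv (fun t : ℝ => k₀₁ * t * mittagLeffler α 2 (-(k * t ^ α))) s
        = ∑' n, mlG α k k₀₁ n s :=
    fun s hs => (ml_hasDerivAt hα hk hk₀₁ hs).deriv
  rw [hderivq t ht]
  have hΓα : (0:ℝ) < Real.Gamma α := Real.Gamma_pos_of_pos hα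
  have hintegr : ∫ τ in (0:ℝ)..t,
      deriv (fun t : ℝ => k₀₁ * t * mittagLeffler α 2 (-(k * t ^ α))) τ * (t-τ)^(α-1)
      = ∑' n : ℕ, (k₀₁ * (-k)^n / Real.Gamma (α*n+1)) *
          (Real.Gamma (α*n+1) * Real.Gamma α / Real.Gamma (α*n+1+α) * t^(α*n+α)) := by
    rw [intervalIntegral.integral_of_le ht.le]
    have heqd : Set.EqOn
        (fun τ => deriv (fun t : ℝ => k₀₁ * t * mittagLeffler α 2 (-(k * t ^ α))) τ * (t-τ)^(α-1))
        (fun τ => (∑' n, mlG α k k₀₁ n τ) * (t-τ)^(α-1)) (Set.Ioc 0 t) := by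
      intro τ hτ
      show _ * _ = _
      rw [hderivq τ hτ.1]
    rw [MeasureTheory.setIntegral_congr_fun measurableSet_Ioc heqd,
      ← intervalIntegral.integral_of_le ht.le, ml_caputo hα hk hk₀₁ ht]
  rw [hintegr]
  have hGsum := mlG_summable hα hk hk₀₁ (ht.le : (0:ℝ) ≤ t)
  rw [Summable.tsum_eq_zero_add hGsum]
  have hG0 : mlG α k k₀₁ 0 t = k₀₁ := by
    rw [mlG]
    norm_num [Real.Gamma_one]
  rw [hG0]
  have hterm : ∀ n : ℕ, mlG α k k₀₁ (n+1) t
      = (-(k * (1/Real.Gamma α))) * ((k₀₁ * (-k)^n / Real.Gamma (α*n+1)) *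
          (Real.Gamma (α*n+1) * Real.Gamma α / Real.Gamma (α*n+1+α) * t^(α*n+α))) := by
    intro n
    have hΓ1 : (0:ℝ) < Real.Gamma (α*n+1) := Real.Gamma_pos_of_pos (by positivity)
    have hΓ2 : (0:ℝ) < Real.Gamma (α*n+1+α) := Real.Gamma_pos_of_pos (by positivity)
    rw [mlG]
    push_cast
    rw [show (α*((n:ℝ)+1)+1 : ℝ) = α*n+1+α by ring, show (α*((n:ℝ)+1) : ℝ) = α*n+α by ring]
    field_simp
    ring
  rw [tsum_congr hterm, tsum_mul_left]
  ring
end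

section
/- Let 0 < α < 1, k₀₁ > 0, k > 0, and define q(t) = k₀₁·Γ(α)·t^α·E_{α,α+1}(-k·t^α) for t ≥ 0. Then q(0) = 0, q is differentiable on (0,∞), and q solves the one-compartment model with power-law infusion rate k₀₁·t^{α-1} and fractional elimination: for every t > 0, q'(t) = k₀₁·t^{α-1} - k · (1/Γ(α)) · ∫_0^t q'(τ)·(t-τ)^{α-1} dτ. -/
open Real MeasureTheory intervalIntegral

/-- Gautschi-type lower bound via log-convexity. -/
lemma gamma_gautschi {α : ℝ} (hα : 0 < α) (hα1 : α < 1) {x : ℝ} (hx : 0 < x) :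
    x * Real.Gamma x ≤ Real.Gamma (x + α) * (x + α) ^ (1 - α) := by
  have hxα : 0 < x + α := by linarith
  have hΓ : 0 < Real.Gamma (x + α) := Real.Gamma_pos_of_pos hxα
  have hΓ1 : 0 < Real.Gamma (x + α + 1) := Real.Gamma_pos_of_pos (by linarith)
  have hconv := Real.convexOn_log_Gamma.2 (Set.mem_Ioi.2 hxα)
    (Set.mem_Ioi.2 (show (0:ℝ) < x + α + 1 by linarith)) (le_of_lt hα)
    (by linarith : (0:ℝ) ≤ 1 - α) (by ring)
  have hcomb : α • (x + α) + (1 - α) • (x + α + 1) = x + 1 := by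
    simp [smul_eq_mul]; ring
  rw [hcomb] at hconv
  simp only [Function.comp_apply, smul_eq_mul] at hconv
  have hadd : Real.Gamma (x + α + 1) = (x + α) * Real.Gamma (x + α) :=
    Real.Gamma_add_one (ne_of_gt hxα)
  have h2 : Real.log (Real.Gamma (x + 1)) ≤
      Real.log (Real.Gamma (x + α)) + (1 - α) * Real.log (x + α) := by
    calc Real.log (Real.Gamma (x + 1)) ≤
        α * Real.log (Real.Gamma (x + α)) + (1 - α) * Real.log (Real.Gamma (x + α + 1)) := hconv
      _ = Real.log (Real.Gamma (x + α)) + (1 - α) * Real.log (x + α) := by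
          rw [hadd, Real.log_mul (ne_of_gt hxα) (ne_of_gt hΓ)]; ring
  have hpos1 : 0 < Real.Gamma (x + 1) := Real.Gamma_pos_of_pos (by linarith)
  have := Real.exp_le_exp.2 h2
  rw [Real.exp_log hpos1, Real.exp_add, Real.exp_log hΓ] at this
  rw [Real.Gamma_add_one (ne_of_gt hx)] at this
  calc x * Real.Gamma x ≤ Real.Gamma (x + α) * Real.exp ((1 - α) * Real.log (x + α)) := this
    _ = Real.Gamma (x + α) * (x + α) ^ (1 - α) := by
        rw [Real.rpow_def_of_pos hxα, mul_comm (1 - α)]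

/-- Key summability: `∑ r^n / Γ(α n + c)` converges. -/
lemma summable_pow_div_gamma {α : ℝ} (hα : 0 < α) (hα1 : α < 1) {c : ℝ} (hc : 0 < c)
    {r : ℝ} (hr : 0 ≤ r) :
    Summable (fun n : ℕ => r ^ n / Real.Gamma (α * n + c)) := by
  apply summable_of_ratio_norm_eventually_le (r := 1/2) (by norm_num)
  -- eventually x_n ≥ α and x_n^α ≥ 2r * 2^(1-α)
  have hx_tend : Filter.Tendsto (fun n : ℕ => α * n + c) Filter.atTop Filter.atTop := by
    have := (tendsto_natCast_atTop_atTop (R := ℝ)).const_mul_atTop hα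
    exact this.atTop_add tendsto_const_nhds
  have h1 : ∀ᶠ n : ℕ in Filter.atTop, α ≤ α * n + c := hx_tend.eventually_ge_atTop α
  have h2 : ∀ᶠ n : ℕ in Filter.atTop, 2 * r * 2 ^ (1 - α) ≤ (α * n + c) ^ α := by
    have := (tendsto_rpow_atTop hα).comp hx_tend
    exact this.eventually_ge_atTop _
  filter_upwards [h1, h2] with n hn1 hn2
  set x := α * n + c with hxdef
  have hx : 0 < x := lt_of_lt_of_le hα hn1
  have hxα : 0 < x + α := by linarith
  have hΓ : 0 < Real.Gamma x := Real.Gamma_pos_of_pos hx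
  have hΓα : 0 < Real.Gamma (x + α) := Real.Gamma_pos_of_pos hxα
  have hidx : α * (n + 1 : ℕ) + c = x + α := by push_cast; ring
  -- main inequality : 2 * r * Gamma x ≤ Gamma (x + α)
  have key : 2 * r * Real.Gamma x ≤ Real.Gamma (x + α) := by
    have hg := gamma_gautschi hα hα1 hx
    -- Gamma (x+α) ≥ x * Gamma x * (x+α)^(α-1)
    have hpow : (0:ℝ) < (x + α) ^ (1 - α) := Real.rpow_pos_of_pos hxα _
    have hlow : x * Real.Gamma x * (x + α) ^ (α - 1) ≤ Real.Gamma (x + α) := by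
      rw [show (α - 1 : ℝ) = -(1 - α) by ring, Real.rpow_neg hxα.le]
      rw [mul_comm (Real.Gamma (x+α)) _] at hg
      calc x * Real.Gamma x * ((x + α) ^ (1 - α))⁻¹
          ≤ ((x + α) ^ (1 - α) * Real.Gamma (x + α)) * ((x + α) ^ (1 - α))⁻¹ := by
            apply mul_le_mul_of_nonneg_right hg (inv_nonneg.2 hpow.le)
        _ = Real.Gamma (x + α) := by field_simp
    refine le_trans ?_ hlow
    -- 2r ≤ x * (x+α)^(α-1)
    have hx2 : x + α ≤ 2 * x := by linarith
    have hmono : (2 * x) ^ (α - 1) ≤ (x + α) ^ (α - 1) :=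
      Real.rpow_le_rpow_of_nonpos hxα hx2 (by linarith)
    have hsplit : (2 * x) ^ (α - 1) = 2 ^ (α - 1) * x ^ (α - 1) :=
      Real.mul_rpow (by norm_num) hx.le
    have hxx : x * x ^ (α - 1) = x ^ α := by
      rw [show x * x ^ (α-1) = x ^ (1:ℝ) * x ^ (α-1) by rw [Real.rpow_one],
        ← Real.rpow_add hx]; ring_nf
    have h2r : 2 * r ≤ x * (x + α) ^ (α - 1) := by
      calc 2 * r = (2 * r * 2 ^ (1 - α)) * 2 ^ (α - 1) := by
            rw [mul_assoc, ← Real.rpow_add (by norm_num : (0:ℝ) < 2)]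
            norm_num
        _ ≤ x ^ α * 2 ^ (α - 1) := by
            apply mul_le_mul_of_nonneg_right hn2 (Real.rpow_pos_of_pos two_pos _).le
        _ = x * (2 * x) ^ (α - 1) := by rw [hsplit, ← hxx]; ring
        _ ≤ x * (x + α) ^ (α - 1) := mul_le_mul_of_nonneg_left hmono hx.le
    calc 2 * r * Real.Gamma x ≤ (x * (x + α) ^ (α - 1)) * Real.Gamma x :=
          mul_le_mul_of_nonneg_right h2r hΓ.le
      _ = x * Real.Gamma x * (x + α) ^ (α - 1) := by ring
  -- conclude ratio bound
  rw [hidx]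
  rw [Real.norm_eq_abs, Real.norm_eq_abs, abs_div, abs_div, abs_of_pos hΓ, abs_of_pos hΓα,
    abs_pow, abs_pow, abs_of_nonneg hr]
  rw [div_le_iff₀ hΓα, pow_succ]
  have : r ^ n * r * Real.Gamma x * 2 ≤ r ^ n * Real.Gamma (x + α) := by
    calc r ^ n * r * Real.Gamma x * 2 = r ^ n * (2 * r * Real.Gamma x) := by ring
      _ ≤ r ^ n * Real.Gamma (x + α) :=
          mul_le_mul_of_nonneg_left key (pow_nonneg hr n)
  calc r ^ n * r = (r ^ n * r * Real.Gamma x * 2) / (2 * Real.Gamma x) := by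
        field_simp
    _ ≤ (r ^ n * Real.Gamma (x + α)) / (2 * Real.Gamma x) := by gcongr
    _ = 1/2 * (r ^ n / Real.Gamma x) * Real.Gamma (x + α) := by field_simp

open Real MeasureTheory intervalIntegral Set

/-- The standard Beta integrand on [0,1] as the real part of the complex one. -/
lemma beta01_eq {a b : ℝ} (ha : 0 < a) (hb : 0 < b) :
    Set.EqOn (fun x : ℝ => (x : ℂ) ^ ((a : ℂ) - 1) * (1 - (x : ℂ)) ^ ((b : ℂ) - 1))
      (fun x : ℝ => ((x ^ (a - 1) * (1 - x) ^ (b - 1) : ℝ) : ℂ)) (Set.Icc 0 1) := by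
  intro x hx
  simp only
  rw [Complex.ofReal_mul, Complex.ofReal_cpow hx.1 (a - 1),
    Complex.ofReal_cpow (by linarith [hx.2] : (0:ℝ) ≤ 1 - x) (b - 1)]
  push_cast
  ring_nf

lemma beta01_integrable {a b : ℝ} (ha : 0 < a) (hb : 0 < b) :
    IntervalIntegrable (fun x : ℝ => x ^ (a - 1) * (1 - x) ^ (b - 1)) volume 0 1 := by
  have hc := Complex.betaIntegral_convergent (u := a) (v := b) (by simpa using ha)
    (by simpa using hb)
  rw [intervalIntegrable_iff_integrableOn_Ioc_of_le (by norm_num : (0:ℝ) ≤ 1)] at hc ⊢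
  have := hc.congr_fun (fun x hx => beta01_eq ha hb (Ioc_subset_Icc_self hx)) measurableSet_Ioc
  have h := this.re
  simp at h
  exact h

lemma beta01_value {a b : ℝ} (ha : 0 < a) (hb : 0 < b) :
    ∫ x in (0:ℝ)..1, x ^ (a - 1) * (1 - x) ^ (b - 1)
      = Real.Gamma a * Real.Gamma b / Real.Gamma (a + b) := by
  have key := Complex.Gamma_mul_Gamma_eq_betaIntegral (s := a) (t := b)
    (by simpa using ha) (by simpa using hb)
  have hbeta : Complex.betaIntegral a b
      = ((∫ x in (0:ℝ)..1, x ^ (a - 1) * (1 - x) ^ (b - 1) : ℝ) : ℂ) := by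
    rw [Complex.betaIntegral]
    rw [intervalIntegral.integral_congr (g := fun x : ℝ =>
      ((x ^ (a - 1) * (1 - x) ^ (b - 1) : ℝ) : ℂ)) (by
        simpa [Set.uIcc_of_le (by norm_num : (0:ℝ) ≤ 1)] using beta01_eq ha hb)]
    exact intervalIntegral.integral_ofReal
  rw [hbeta, ← Complex.ofReal_add, Complex.Gamma_ofReal, Complex.Gamma_ofReal,
    Complex.Gamma_ofReal, ← Complex.ofReal_mul, ← Complex.ofReal_mul] at key
  have := Complex.ofReal_inj.1 key
  have hΓ : Real.Gamma (a + b) ≠ 0 := (Real.Gamma_pos_of_pos (by linarith)).ne'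
  field_simp
  linarith [this]

lemma beta_scaled_eqOn {a b t : ℝ} (ht : 0 < t) :
    Set.EqOn (fun τ : ℝ => τ ^ (a - 1) * (t - τ) ^ (b - 1))
      (fun τ : ℝ => t ^ (a + b - 2) * ((t⁻¹ * τ) ^ (a - 1) * (1 - t⁻¹ * τ) ^ (b - 1)))
      (Set.Icc 0 t) := by
  intro τ hτ
  simp only
  have h1 : t⁻¹ * τ = τ / t := by ring
  have h2 : 1 - t⁻¹ * τ = (t - τ) / t := by field_simp
  rw [h2, h1, Real.div_rpow hτ.1 ht.le, Real.div_rpow (by linarith [hτ.2]) ht.le]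
  have h3 : t ^ (a - 1) * t ^ (b - 1) = t ^ (a + b - 2) := by
    rw [← Real.rpow_add ht]; ring_nf
  have h4 : (0:ℝ) < t ^ (a + b - 2) := Real.rpow_pos_of_pos ht _
  field_simp
  rw [← h3]; ring

lemma beta_intervalIntegrable {a b t : ℝ} (ha : 0 < a) (hb : 0 < b) (ht : 0 < t) :
    IntervalIntegrable (fun τ : ℝ => τ ^ (a - 1) * (t - τ) ^ (b - 1)) volume 0 t := by
  have h1 := (beta01_integrable ha hb).comp_mul_left (c := t⁻¹)
  have h2 := h1.const_mul (t ^ (a + b - 2))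
  rw [show (0:ℝ) / t⁻¹ = 0 by simp, show (1:ℝ) / t⁻¹ = t by simp] at h2
  rw [intervalIntegrable_iff_integrableOn_Ioc_of_le ht.le] at h2 ⊢
  exact h2.congr_fun
    (fun τ hτ => (beta_scaled_eqOn ht (Set.Ioc_subset_Icc_self hτ)).symm)
    measurableSet_Ioc

lemma beta_value {a b t : ℝ} (ha : 0 < a) (hb : 0 < b) (ht : 0 < t) :
    ∫ τ in (0:ℝ)..t, τ ^ (a - 1) * (t - τ) ^ (b - 1)
      = Real.Gamma a * Real.Gamma b / Real.Gamma (a + b) * t ^ (a + b - 1) := by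
  rw [intervalIntegral.integral_congr (g := fun τ : ℝ =>
      t ^ (a + b - 2) * ((t⁻¹ * τ) ^ (a - 1) * (1 - t⁻¹ * τ) ^ (b - 1)))
      (by simpa [Set.uIcc_of_le ht.le] using beta_scaled_eqOn (a := a) (b := b) ht)]
  rw [intervalIntegral.integral_const_mul]
  have : (∫ τ in (0:ℝ)..t, ((t⁻¹ * τ) ^ (a - 1) * (1 - t⁻¹ * τ) ^ (b - 1)))
      = t • ∫ s in (0:ℝ)..1, (s ^ (a - 1) * (1 - s) ^ (b - 1)) := by
    have := intervalIntegral.integral_comp_div (a := (0:ℝ)) (b := t) (c := t)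
      (f := fun s : ℝ => s ^ (a - 1) * (1 - s) ^ (b - 1)) ht.ne'
    simp only [zero_div, div_self ht.ne'] at this
    rw [← this]
    congr 1; ext τ; rw [show τ / t = t⁻¹ * τ by ring]
  rw [this, beta01_value ha hb, smul_eq_mul]
  rw [show a + b - 1 = (a + b - 2) + 1 by ring, Real.rpow_add_one ht.ne']
  ring

section Main

variable {α k : ℝ}

/-- The `n`-th term of the series for `t^α E_{α,α+1}(-k t^α)`. -/
noncomputable def Fser (α k : ℝ) (n : ℕ) (t : ℝ) : ℝ :=
  ((-k) ^ n / Real.Gamma (α * n + α + 1)) * t ^ (α * n + α)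

/-- The `n`-th term of the derivative series. -/
noncomputable def Gser (α k : ℝ) (n : ℕ) (t : ℝ) : ℝ :=
  ((-k) ^ n / Real.Gamma (α * n + α)) * t ^ (α * n + α - 1)

lemma series_repr (hα : 0 < α) {t : ℝ} (ht : 0 < t) :
    t ^ α * mittagLeffler α (α + 1) (-(k * t ^ α)) = ∑' n, Fser α k n t := by
  rw [mittagLeffler, ← tsum_mul_left]
  apply tsum_congr
  intro n
  rw [Fser]
  have h1 : (-(k * t ^ α)) ^ n = (-k) ^ n * (t ^ α) ^ n := by
    rw [← neg_mul, mul_pow]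
  have h2 : (t ^ α) ^ n = t ^ (α * n) := by
    rw [← Real.rpow_natCast (t ^ α) n, ← Real.rpow_mul ht.le]
  have h3 : t ^ α * t ^ (α * n) = t ^ (α * n + α) := by
    rw [← Real.rpow_add ht]; ring_nf
  have h4 : α * n + (α + 1) = α * n + α + 1 := by ring
  rw [h1, h2, h4, ← h3]
  ring

lemma summable_sgn_pow_div_gamma (hα : 0 < α) (hα1 : α < 1) {c : ℝ} (hc : 0 < c) (s : ℝ) :
    Summable (fun n : ℕ => s ^ n / Real.Gamma (α * n + c)) := by
  refine Summable.of_norm_bounded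
    (summable_pow_div_gamma hα hα1 hc (abs_nonneg s)) (fun n => ?_)
  have hΓ : 0 < Real.Gamma (α * n + c) :=
    Real.Gamma_pos_of_pos (by positivity)
  rw [Real.norm_eq_abs, abs_div, abs_pow, abs_of_pos hΓ]

lemma pow_mul_rpow {t : ℝ} (ht : 0 ≤ t) (r : ℝ) (n : ℕ) :
    (r * t ^ α) ^ n = r ^ n * t ^ (α * n) := by
  rw [mul_pow, ← Real.rpow_natCast (t ^ α) n, ← Real.rpow_mul ht]

lemma summable_F (hα : 0 < α) (hα1 : α < 1) (hk : 0 < k) {t : ℝ} (ht : 0 < t) :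
    Summable (fun n => Fser α k n t) := by
  have h := (summable_sgn_pow_div_gamma hα hα1
    (show (0:ℝ) < α + 1 by linarith) (-(k * t ^ α))).mul_left (t ^ α)
  refine h.congr (fun n => ?_)
  rw [Fser]
  have h1 : (-(k * t ^ α)) ^ n = (-k) ^ n * t ^ (α * n) := by
    rw [← neg_mul]; exact pow_mul_rpow ht.le (-k) n
  have h3 : t ^ α * t ^ (α * n) = t ^ (α * n + α) := by
    rw [← Real.rpow_add ht]; ring_nf
  have h4 : α * n + (α + 1) = α * n + α + 1 := by ring
  rw [h1, h4, ← h3]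
  ring

lemma summable_G (hα : 0 < α) (hα1 : α < 1) (hk : 0 < k) {t : ℝ} (ht : 0 < t) :
    Summable (fun n => Gser α k n t) := by
  have h := (summable_sgn_pow_div_gamma hα hα1 hα (-(k * t ^ α))).mul_left (t ^ (α - 1))
  refine h.congr (fun n => ?_)
  rw [Gser]
  have h1 : (-(k * t ^ α)) ^ n = (-k) ^ n * t ^ (α * n) := by
    rw [← neg_mul]; exact pow_mul_rpow ht.le (-k) n
  have h3 : t ^ (α - 1) * t ^ (α * n) = t ^ (α * n + α - 1) := by
    rw [← Real.rpow_add ht]; ring_nf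
  rw [h1, ← h3]
  ring

lemma hasDerivAt_F (hα : 0 < α) {n : ℕ} {y : ℝ} (hy : 0 < y) :
    HasDerivAt (Fser α k n) (Gser α k n y) y := by
  have hp : (0:ℝ) < α * n + α := by positivity
  have hd := (Real.hasDerivAt_rpow_const (p := α * n + α)
    (Or.inl hy.ne')).const_mul ((-k) ^ n / Real.Gamma (α * n + α + 1))
  have hΓ : Real.Gamma (α * n + α + 1) = (α * n + α) * Real.Gamma (α * n + α) :=
    Real.Gamma_add_one hp.ne'
  have hΓpos : 0 < Real.Gamma (α * n + α) := Real.Gamma_pos_of_pos hp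
  refine hd.congr_deriv ?_
  rw [Gser, hΓ]
  field_simp

lemma hasDerivAt_tsumF (hα : 0 < α) (hα1 : α < 1) (hk : 0 < k) {t : ℝ} (ht : 0 < t) :
    HasDerivAt (fun s => ∑' n, Fser α k n s) (∑' n, Gser α k n t) t := by
  set u : ℕ → ℝ := fun n =>
    (t/2) ^ (α - 1) * ((k * (t+1) ^ α) ^ n / Real.Gamma (α * n + α)) with hu_def
  have hu : Summable u := by
    apply Summable.mul_left
    exact summable_pow_div_gamma hα hα1 hα
      (by positivity : (0:ℝ) ≤ k * (t+1) ^ α)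
  apply hasDerivAt_tsum_of_isPreconnected hu (isOpen_Ioo (a := t/2) (b := t+1))
    (isPreconnected_Ioo) (fun n y hy => hasDerivAt_F hα (by linarith [hy.1]))
    ?_ (Set.mem_Ioo.2 ⟨by linarith, by linarith⟩)
    (summable_F hα hα1 hk ht) (Set.mem_Ioo.2 ⟨by linarith, by linarith⟩)
  intro n y hy
  have hy0 : 0 < y := by have := hy.1; simp at this ⊢; linarith
  have hy1 : y ≤ t + 1 := le_of_lt hy.2
  have hy2 : t/2 ≤ y := le_of_lt hy.1
  have hΓpos : 0 < Real.Gamma (α * n + α) := Real.Gamma_pos_of_pos (by positivity)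
  rw [Gser, Real.norm_eq_abs, abs_mul, abs_div, abs_pow, abs_neg, abs_of_pos hk,
    abs_of_pos hΓpos, abs_of_pos (Real.rpow_pos_of_pos hy0 _)]
  have hsplit : y ^ (α * n + α - 1) = y ^ (α * (n:ℝ)) * y ^ (α - 1) := by
    rw [← Real.rpow_add hy0]; ring_nf
  have hb1 : y ^ (α * (n:ℝ)) ≤ (t+1) ^ (α * (n:ℝ)) :=
    Real.rpow_le_rpow hy0.le hy1 (by positivity)
  have hb2 : y ^ (α - 1) ≤ (t/2) ^ (α - 1) :=
    Real.rpow_le_rpow_of_nonpos (by linarith) hy2 (by linarith)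
  have hexp : (k * (t+1) ^ α) ^ n = k ^ n * (t+1) ^ (α * (n:ℝ)) :=
    pow_mul_rpow (by linarith) k n
  rw [hu_def]
  simp only
  rw [hexp, hsplit]
  have h1 : k ^ n / Real.Gamma (α * n + α) * (y ^ (α * (n:ℝ)) * y ^ (α - 1))
      ≤ k ^ n / Real.Gamma (α * n + α) * ((t+1) ^ (α * (n:ℝ)) * (t/2) ^ (α - 1)) := by
    apply mul_le_mul_of_nonneg_left _ (by positivity)
    apply mul_le_mul hb1 hb2 (Real.rpow_pos_of_pos hy0 _).le
      (Real.rpow_nonneg (by linarith) _)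
  calc k ^ n / Real.Gamma (α * n + α) * (y ^ (α * (n:ℝ)) * y ^ (α - 1))
      ≤ k ^ n / Real.Gamma (α * n + α) * ((t+1) ^ (α * (n:ℝ)) * (t/2) ^ (α - 1)) := h1
    _ = (t/2) ^ (α - 1) * (k ^ n * (t+1) ^ (α * (n:ℝ)) / Real.Gamma (α * n + α)) := by
        ring

lemma q_hasDerivAt {k₀₁ : ℝ} (hα : 0 < α) (hα1 : α < 1) (hk : 0 < k) {q : ℝ → ℝ}
    (hq : q = fun t : ℝ =>
      k₀₁ * Real.Gamma α * t ^ α * mittagLeffler α (α + 1) (-(k * t ^ α)))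
    {t : ℝ} (ht : 0 < t) :
    HasDerivAt q (k₀₁ * Real.Gamma α * ∑' n, Gser α k n t) t := by
  have heq : (fun s => k₀₁ * Real.Gamma α * ∑' n, Fser α k n s) =ᶠ[nhds t] q := by
    filter_upwards [Ioi_mem_nhds ht] with s hs
    rw [hq]
    simp only
    rw [← series_repr hα hs (k := k)]
    ring
  exact ((hasDerivAt_tsumF hα hα1 hk ht).const_mul
    (k₀₁ * Real.Gamma α)).congr_of_eventuallyEq heq.symm

lemma key_integral {k₀₁ : ℝ} (hα : 0 < α) (hα1 : α < 1) (hk : 0 < k) {q : ℝ → ℝ}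
    (hq : q = fun t : ℝ =>
      k₀₁ * Real.Gamma α * t ^ α * mittagLeffler α (α + 1) (-(k * t ^ α)))
    {t : ℝ} (ht : 0 < t) :
    ∫ τ in (0:ℝ)..t, deriv q τ * (t - τ) ^ (α - 1)
      = k₀₁ * Real.Gamma α * Real.Gamma α *
        ∑' n : ℕ, ((-k) ^ n / Real.Gamma (α * n + α + α)) * t ^ (α * n + α + α - 1) := by
  obtain ⟨C, hC⟩ : ∃ C : ℝ, C = k₀₁ * Real.Gamma α := ⟨_, rfl⟩
  set H : ℕ → ℝ → ℝ := fun n τ =>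
    (C * ((-k) ^ n / Real.Gamma (α * n + α))) *
      (τ ^ (α * n + α - 1) * (t - τ) ^ (α - 1)) with hH
  have hΓα : (0:ℝ) < Real.Gamma α := Real.Gamma_pos_of_pos hα
  have hderiv : ∀ τ : ℝ, 0 < τ → deriv q τ = C * ∑' n, Gser α k n τ := by
    intro τ hτ
    rw [hC]
    exact (q_hasDerivAt hα hα1 hk hq hτ).deriv
  have hInt : ∀ n : ℕ, IntegrableOn
      (fun τ => τ ^ (α * n + α - 1) * (t - τ) ^ (α - 1)) (Set.Ioc 0 t) volume := by
    intro n
    have := beta_intervalIntegrable (a := α * n + α) (b := α) (by positivity) hα ht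
    rwa [intervalIntegrable_iff_integrableOn_Ioc_of_le ht.le] at this
  have hHint : ∀ n : ℕ, IntegrableOn (H n) (Set.Ioc 0 t) volume :=
    fun n => (hInt n).const_mul _
  have hval : ∀ n : ℕ, ∫ τ in Set.Ioc (0:ℝ) t, τ ^ (α * n + α - 1) * (t - τ) ^ (α - 1)
      = Real.Gamma (α * n + α) * Real.Gamma α / Real.Gamma (α * n + α + α)
        * t ^ (α * n + α + α - 1) := by
    intro n
    rw [← intervalIntegral.integral_of_le ht.le]
    exact beta_value (by positivity) hα ht
  have hnonneg : ∀ n : ℕ, ∀ τ ∈ Set.Ioc (0:ℝ) t,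
      0 ≤ τ ^ (α * n + α - 1) * (t - τ) ^ (α - 1) := by
    intro n τ hτ
    exact mul_nonneg (Real.rpow_nonneg hτ.1.le _) (Real.rpow_nonneg (by linarith [hτ.2]) _)
  -- the summable majorant
  set v : ℕ → ℝ := fun n => |C * ((-k) ^ n / Real.Gamma (α * n + α))| *
      (Real.Gamma (α * n + α) * Real.Gamma α / Real.Gamma (α * n + α + α)
        * t ^ (α * n + α + α - 1)) with hv
  have hv_nonneg : ∀ n, 0 ≤ v n := by
    intro n
    apply mul_nonneg (abs_nonneg _)
    have h1 : (0:ℝ) < Real.Gamma (α * n + α) := Real.Gamma_pos_of_pos (by positivity)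
    have h2 : (0:ℝ) < Real.Gamma (α * n + α + α) := Real.Gamma_pos_of_pos (by positivity)
    positivity
  have hv_sum : Summable v := by
    have base := (summable_pow_div_gamma hα hα1 (show (0:ℝ) < α + α by linarith)
      (show (0:ℝ) ≤ k * t ^ α by positivity)).mul_left (|C| * Real.Gamma α * t ^ (α + α - 1))
    refine base.congr (fun n => ?_)
    have h1 : (0:ℝ) < Real.Gamma (α * n + α) := Real.Gamma_pos_of_pos (by positivity)
    have h2 : (0:ℝ) < Real.Gamma (α * n + (α + α)) := Real.Gamma_pos_of_pos (by positivity)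
    have hexp : (k * t ^ α) ^ n = k ^ n * t ^ (α * n) := pow_mul_rpow ht.le k n
    have hexp2 : t ^ (α * n) * t ^ (α + α - 1) = t ^ (α * n + α + α - 1) := by
      rw [← Real.rpow_add ht]; ring_nf
    have habs : |C * ((-k) ^ n / Real.Gamma (α * n + α))|
        = |C| * (k ^ n / Real.Gamma (α * n + α)) := by
      rw [abs_mul, abs_div, abs_pow, abs_neg, abs_of_pos hk, abs_of_pos h1]
    rw [hv]
    simp only
    rw [habs, show α * n + α + α = α * n + (α + α) by ring, hexp]
    field_simp
    rw [mul_assoc, ← Real.rpow_add ht]; ring_nf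
  -- interchange
  rw [intervalIntegral.integral_of_le ht.le]
  rw [MeasureTheory.setIntegral_congr_fun measurableSet_Ioc
    (show Set.EqOn (fun τ => deriv q τ * (t - τ) ^ (α - 1))
      (fun τ => ∑' n, H n τ) (Set.Ioc 0 t) from ?_)]
  · rw [MeasureTheory.integral_tsum
      (fun n => (hHint n).aestronglyMeasurable) ?_]
    · -- evaluate each integral and sum
      have : ∀ n : ℕ, ∫ τ in Set.Ioc (0:ℝ) t, H n τ
          = (C * Real.Gamma α) * (((-k) ^ n / Real.Gamma (α * n + α + α))
              * t ^ (α * n + α + α - 1)) := by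
        intro n
        rw [hH]
        simp only
        rw [MeasureTheory.integral_const_mul, hval n]
        have h1 : (0:ℝ) < Real.Gamma (α * n + α) := Real.Gamma_pos_of_pos (by positivity)
        have h2 : (0:ℝ) < Real.Gamma (α * n + α + α) := Real.Gamma_pos_of_pos (by positivity)
        field_simp
      rw [tsum_congr this, tsum_mul_left, hC]

    · -- the lintegral bound
      have hlin : ∀ n : ℕ, ∫⁻ τ in Set.Ioc (0:ℝ) t, ‖H n τ‖ₑ = ENNReal.ofReal (v n) := by
        intro n
        rw [← MeasureTheory.ofReal_integral_norm_eq_lintegral_enorm (hHint n)]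
        congr 1
        rw [hv]
        simp only
        rw [← hval n, ← MeasureTheory.integral_const_mul]
        apply MeasureTheory.setIntegral_congr_fun measurableSet_Ioc
        intro τ hτ
        simp only [hH, norm_mul, Real.norm_eq_abs]
        rw [abs_of_nonneg (Real.rpow_nonneg hτ.1.le _),
          abs_of_nonneg (Real.rpow_nonneg (by linarith [hτ.2] : (0:ℝ) ≤ t - τ) _),
          abs_mul C ((-k) ^ n / Real.Gamma (α * n + α))]
      rw [funext hlin] at *
      rw [show (fun n : ℕ => ENNReal.ofReal (v n)) = fun n => ENNReal.ofReal (v n) from rfl]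
      rw [← ENNReal.ofReal_tsum_of_nonneg hv_nonneg hv_sum]
      exact ENNReal.ofReal_ne_top
  · -- the EqOn
    intro τ hτ
    simp only
    rw [hderiv τ hτ.1, mul_assoc, ← tsum_mul_right, ← tsum_mul_left]
    apply tsum_congr
    intro n
    rw [hH, Gser]
    simp only
    ring

end Main

/-- Let 0 < α < 1, k₀₁ > 0, k > 0, and define
`q(t) = k₀₁·Γ(α)·t^α·E_{α,α+1}(-k·t^α)`. Then q(0) = 0, q is differentiable on (0,∞),
and q solves the one-compartment model with power-law infusion rate `k₀₁·t^{α-1}` and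
fractional elimination: for every t > 0,
`q'(t) = k₀₁·t^{α-1} - k · (1/Γ(α)) · ∫_0^t q'(τ)·(t-τ)^{α-1} dτ`. -/
theorem power_law_infusion_fractional_elimination (α k₀₁ k : ℝ)
    (hα : 0 < α) (hα1 : α < 1) (hk₀₁ : 0 < k₀₁) (hk : 0 < k) (q : ℝ → ℝ)
    (hq : q = fun t : ℝ =>
      k₀₁ * Real.Gamma α * t ^ α * mittagLeffler α (α + 1) (-(k * t ^ α))) :
    q 0 = 0 ∧
    (∀ t : ℝ, 0 < t → DifferentiableAt ℝ q t) ∧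
    (∀ t : ℝ, 0 < t →
      deriv q t = k₀₁ * t ^ (α - 1) -
        k * ((1 / Real.Gamma α) * ∫ τ in (0:ℝ)..t, deriv q τ * (t - τ) ^ (α - 1))) := by
  have hΓα : (0:ℝ) < Real.Gamma α := Real.Gamma_pos_of_pos hα
  refine ⟨?_, ?_, ?_⟩
  · rw [hq]
    simp [Real.zero_rpow hα.ne']
  · intro t ht
    exact (q_hasDerivAt hα hα1 hk hq ht).differentiableAt
  · intro t ht
    rw [(q_hasDerivAt hα hα1 hk hq ht).deriv, key_integral hα hα1 hk hq ht]
    have hsum := summable_G (α := α) (k := k) hα hα1 hk ht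
    rw [hsum.tsum_eq_zero_add]
    have h0 : Gser α k 0 t = (1 / Real.Gamma α) * t ^ (α - 1) := by
      simp [Gser]
    have hshift : ∀ n : ℕ, Gser α k (n + 1) t
        = -k * (((-k) ^ n / Real.Gamma (α * n + α + α)) * t ^ (α * n + α + α - 1)) := by
      intro n
      rw [Gser]
      push_cast
      rw [pow_succ]
      ring
    rw [tsum_congr hshift, tsum_mul_left, h0]
    field_simp
    ring
end
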